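/- Let A be a discrete valuation ring with uniformizer ϖ, residue characteristic ≠ 2, K = Frac(A), and ρ : G → Aut_K(V) a 2-dimensional representation admitting a G-stable A-lattice T. Assume there exists g₀ ∈ G whose characteristic polynomial has roots in A distinct mod ϖ. Then the ideal of reducibility satisfies I(ρ) ⊆ (ϖ) if and only if the semi-simplification of T/ϖT is a direct sum of two characters A/(ϖ)(ψ₁) ⊕ A/(ϖ)(ψ₂); moreover, in that case ψ₁ ≠ ψ₂. -/

import Mathlib

open Matrix

variable {A : Type*} [CommRing A] {K : Type*} [Field K] [Algebra A K]
  {G : Type*} [Group G]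

/-- `T` is a `G`-stable `A`-lattice of `V = K²` for the representation `ρ`. -/
def IsStableLattice (ρ : G →* Matrix.GeneralLinearGroup (Fin 2) K)
    (T : Submodule A (Fin 2 → K)) : Prop :=
  T.FG ∧ Submodule.span K (T : Set (Fin 2 → K)) = ⊤ ∧
    ∀ g : G, ∀ v ∈ T, ((ρ g : Matrix (Fin 2) (Fin 2) K).mulVec v) ∈ T



lemma principal_of_fg {A K : Type*} [CommRing A] [IsDomain A] [IsPrincipalIdealRing A]
    [Field K] [Algebra A K] [IsFractionRing A K]
    (J : Submodule A K) (hJ : J.FG) : ∃ α : K, J = Submodule.span A {α} := by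
  have hf : IsFractional (nonZeroDivisors A) J := FractionalIdeal.isFractional_of_fg hJ
  have := FractionalIdeal.isPrincipal (R := A) (K := K) ⟨J, hf⟩
  obtain ⟨α, hα⟩ := this
  exact ⟨α, by simpa using hα⟩



lemma mkChar {A : Type*} [CommRing A] {G : Type*} [Group G] (I : Ideal A) (a : G → A)
    (h1 : a 1 = 1)
    (hm : ∀ g h : G, Ideal.Quotient.mk I (a (g * h))
      = Ideal.Quotient.mk I (a g) * Ideal.Quotient.mk I (a h)) :
    ∃ ψ : G →* (A ⧸ I)ˣ, ∀ g, Ideal.Quotient.mk I (a g) = ψ g := by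
  refine ⟨MonoidHom.toHomUnits
    { toFun := fun g => Ideal.Quotient.mk I (a g),
      map_one' := by simp [h1], map_mul' := hm }, fun g => ?_⟩
  simp [MonoidHom.coe_toHomUnits]



lemma aux_case {A : Type*} [CommRing A] {K : Type*} [Field K] [Algebra A K]
    {G : Type*} [Group G]
    (I : Ideal A)
    (ρ : G →* Matrix.GeneralLinearGroup (Fin 2) K)
    (T : Submodule A (Fin 2 → K))
    (hstab : ∀ g : G, ∀ v ∈ T, ((ρ g : Matrix (Fin 2) (Fin 2) K).mulVec v) ∈ T)
    (F₁ F₂ : Fin 2 → K) (hF₁ : F₁ ∈ T) (hF₂ : F₂ ∈ T)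
    (hrep : ∀ v ∈ T, ∃ x y : A, v = x • F₁ + y • F₂)
    (a b c d : G → A)
    (hact1 : ∀ g : G, ((ρ g : Matrix (Fin 2) (Fin 2) K).mulVec F₁) = a g • F₁ + c g • F₂)
    (hact2 : ∀ g : G, ((ρ g : Matrix (Fin 2) (Fin 2) K).mulVec F₂) = b g • F₁ + d g • F₂)
    (ha1 : a 1 = 1) (hd1 : d 1 = 1)
    (hma : ∀ g h : G, a (g * h) = a g * a h + b g * c h)
    (hmd : ∀ g h : G, d (g * h) = c g * b h + d g * d h)
    (hbc : ∀ g g' : G, b g * c g' ∈ I)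
    (hcI : ∀ g : G, c g ∈ I) :
    ∃ (ψ₁ ψ₂ : G →* (A ⧸ I)ˣ) (W : Submodule A (Fin 2 → K)),
      (∀ g, Ideal.Quotient.mk I (a g) = ψ₁ g) ∧
      (∀ g, Ideal.Quotient.mk I (d g) = ψ₂ g) ∧
      I • T ≤ W ∧ W ≤ T ∧
      (∀ g : G, ∀ v ∈ W, ((ρ g : Matrix (Fin 2) (Fin 2) K).mulVec v) ∈ W) ∧
      (∀ g : G, ∀ v ∈ W,
        ((ρ g : Matrix (Fin 2) (Fin 2) K).mulVec v) - algebraMap A K (a g) • v ∈ I • T) ∧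
      (∀ g : G, ∀ v ∈ T,
        ((ρ g : Matrix (Fin 2) (Fin 2) K).mulVec v) - algebraMap A K (d g) • v ∈ W) := by
  have hmk : ∀ g h : G, Ideal.Quotient.mk I (a (g * h))
      = Ideal.Quotient.mk I (a g) * Ideal.Quotient.mk I (a h) := by
    intro g h
    rw [hma g h, map_add, _root_.map_mul, Ideal.Quotient.eq_zero_iff_mem.mpr (hbc g h), add_zero]
  have hmk' : ∀ g h : G, Ideal.Quotient.mk I (d (g * h))
      = Ideal.Quotient.mk I (d g) * Ideal.Quotient.mk I (d h) := by
    intro g h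
    rw [hmd g h, mul_comm (c g) (b h), map_add,
      Ideal.Quotient.eq_zero_iff_mem.mpr (hbc h g), zero_add, _root_.map_mul]
  obtain ⟨ψ₁, hψ₁⟩ := mkChar I a ha1 hmk
  obtain ⟨ψ₂, hψ₂⟩ := mkChar I d hd1 hmk'
  set W : Submodule A (Fin 2 → K) := Submodule.span A {F₁} ⊔ I • T with hW
  have hITle : I • T ≤ T := Submodule.smul_le.mpr fun r _ t ht => T.smul_mem r ht
  have hITstab : ∀ g : G, ∀ w ∈ I • T, ((ρ g : Matrix (Fin 2) (Fin 2) K).mulVec w) ∈ I • T := by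
    intro g w hw
    refine Submodule.smul_induction_on hw (fun r hr t ht => ?_) (fun x y hx hy => ?_)
    · rw [Matrix.mulVec_smul]
      exact Submodule.smul_mem_smul hr (hstab g t ht)
    · rw [Matrix.mulVec_add]; exact add_mem hx hy
  have hmemW : ∀ v ∈ W, ∃ (x : A) (w : Fin 2 → K), w ∈ I • T ∧ v = x • F₁ + w := by
    intro v hv
    rw [hW, Submodule.mem_sup] at hv
    obtain ⟨y, hy, z, hz, rfl⟩ := hv
    obtain ⟨x, rfl⟩ := Submodule.mem_span_singleton.mp hy
    exact ⟨x, z, hz, rfl⟩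
  have hF₁W : F₁ ∈ W := le_sup_left (α := Submodule A (Fin 2 → K))
    (Submodule.mem_span_singleton_self F₁)
  refine ⟨ψ₁, ψ₂, W, hψ₁, hψ₂, le_sup_right, ?_, ?_, ?_, ?_⟩
  · exact sup_le ((Submodule.span_singleton_le_iff_mem _ _).mpr hF₁) hITle
  · -- stability of W
    intro g v hv
    obtain ⟨x, w, hw, rfl⟩ := hmemW v hv
    rw [Matrix.mulVec_add, Matrix.mulVec_smul, hact1 g, smul_add]
    refine add_mem (add_mem ?_ ?_) ?_
    · exact le_sup_left (α := Submodule A (Fin 2 → K))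
        (Submodule.smul_mem _ x (Submodule.smul_mem _ (a g) (Submodule.mem_span_singleton_self F₁)))
    · refine le_sup_right (α := Submodule A (Fin 2 → K)) ?_
      rw [smul_smul]
      exact Submodule.smul_mem_smul (Ideal.mul_mem_left I x (hcI g)) hF₂
    · exact le_sup_right (α := Submodule A (Fin 2 → K)) (hITstab g w hw)
  · -- character condition on W
    intro g v hv
    obtain ⟨x, w, hw, rfl⟩ := hmemW v hv
    have hrw : ((ρ g : Matrix (Fin 2) (Fin 2) K).mulVec (x • F₁ + w))
        - algebraMap A K (a g) • (x • F₁ + w)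
        = (x * c g) • F₂ + (((ρ g : Matrix (Fin 2) (Fin 2) K).mulVec w) - a g • w) := by
      rw [Matrix.mulVec_add, Matrix.mulVec_smul, hact1 g, algebraMap_smul]
      module
    rw [hrw]
    refine add_mem ?_ (sub_mem (hITstab g w hw) (Submodule.smul_mem _ _ hw))
    exact Submodule.smul_mem_smul (Ideal.mul_mem_left I x (hcI g)) hF₂
  · -- quotient character condition
    intro g v hv
    obtain ⟨x, y, rfl⟩ := hrep v hv
    have hrw : ((ρ g : Matrix (Fin 2) (Fin 2) K).mulVec (x • F₁ + y • F₂))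
        - algebraMap A K (d g) • (x • F₁ + y • F₂)
        = (x * a g + y * b g - x * d g) • F₁ + (x * c g) • F₂ := by
      rw [Matrix.mulVec_add, Matrix.mulVec_smul, Matrix.mulVec_smul, hact1 g, hact2 g,
        algebraMap_smul]
      module
    rw [hrw]
    refine add_mem (le_sup_left (α := Submodule A (Fin 2 → K))
      (Submodule.smul_mem _ _ (Submodule.mem_span_singleton_self F₁))) ?_
    exact le_sup_right (α := Submodule A (Fin 2 → K))
      (Submodule.smul_mem_smul (Ideal.mul_mem_left I x (hcI g)) hF₂)

/-- Let `A` be a DVR with uniformizer `ϖ` and residue characteristic `≠ 2`,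
`ρ : G → GL₂(Frac A)` a representation with a `G`-stable lattice `T`, and `g₀ ∈ G`
diagonalized with eigenvalues in `A` distinct mod `ϖ`.  Then the ideal of reducibility
`I(ρ)` (generated by the off-diagonal products `b(g)c(g′)`) is contained in `(ϖ)` if and
only if the semisimplification of `T/ϖT` is a direct sum of two characters
`ψ₁ ⊕ ψ₂` — i.e. iff there is a `G`-stable `W` with `ϖT ⊆ W ⊆ T` on which `G` acts by a
character `ψ₁` mod `ϖT` and with `G` acting on `T/W` by a character `ψ₂`; moreover in that
case `ψ₁ ≠ ψ₂`. -/
theorem stmt6 [IsDomain A] [IsDiscreteValuationRing A] [IsFractionRing A K]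
    (hchar : (2 : A) ∉ IsLocalRing.maximalIdeal A)
    (ϖ : A) (hϖ : Irreducible ϖ)
    (ρ : G →* Matrix.GeneralLinearGroup (Fin 2) K)
    (t : G → A)
    (htr : ∀ g : G, algebraMap A K (t g) = Matrix.trace ((ρ g : Matrix (Fin 2) (Fin 2) K)))
    (T : Submodule A (Fin 2 → K)) (hT : IsStableLattice ρ T)
    (g₀ : G) (lam₁ lam₂ : A)
    (hdiag : (ρ g₀ : Matrix (Fin 2) (Fin 2) K)
      = Matrix.diagonal ![algebraMap A K lam₁, algebraMap A K lam₂])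
    (hdist : lam₁ - lam₂ ∉ Ideal.span {ϖ}) :
    (Ideal.span {r : A | ∃ g g' : G,
        algebraMap A K r = (ρ g : Matrix (Fin 2) (Fin 2) K) 0 1
          * (ρ g' : Matrix (Fin 2) (Fin 2) K) 1 0} ≤ Ideal.span {ϖ}
      ↔ ∃ (ψ₁ ψ₂ : G →* (A ⧸ Ideal.span {ϖ})ˣ) (s₁ s₂ : G → A) (W : Submodule A (Fin 2 → K)),
          (∀ g, Ideal.Quotient.mk (Ideal.span {ϖ}) (s₁ g) = ψ₁ g) ∧
          (∀ g, Ideal.Quotient.mk (Ideal.span {ϖ}) (s₂ g) = ψ₂ g) ∧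
          Ideal.span {ϖ} • T ≤ W ∧ W ≤ T ∧
          (∀ g : G, ∀ v ∈ W, ((ρ g : Matrix (Fin 2) (Fin 2) K).mulVec v) ∈ W) ∧
          (∀ g : G, ∀ v ∈ W,
            ((ρ g : Matrix (Fin 2) (Fin 2) K).mulVec v) - algebraMap A K (s₁ g) • v
              ∈ Ideal.span {ϖ} • T) ∧
          (∀ g : G, ∀ v ∈ T,
            ((ρ g : Matrix (Fin 2) (Fin 2) K).mulVec v) - algebraMap A K (s₂ g) • v ∈ W)) ∧
    (∀ (ψ₁ ψ₂ : G →* (A ⧸ Ideal.span {ϖ})ˣ),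
      (∀ g : G, Ideal.Quotient.mk (Ideal.span {ϖ}) (t g) = (ψ₁ g : A ⧸ Ideal.span {ϖ}) + ψ₂ g) →
      ψ₁ ≠ ψ₂) := by

  obtain ⟨hTfg, hTspan, hstab⟩ := hT
  have hinj : Function.Injective (algebraMap A K) := IsFractionRing.injective A K
  have hprime : (Ideal.span {ϖ} : Ideal A).IsPrime :=
    hϖ.maximalIdeal_eq ▸ (IsLocalRing.maximalIdeal.isMaximal A).isPrime
  -- `lam₁ - lam₂` is a unit
  have hu : IsUnit (lam₁ - lam₂) := by
    by_contra h
    exact hdist (hϖ.maximalIdeal_eq ▸ IsLocalRing.mem_maximalIdeal _ |>.mpr h)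
  -- projections preserve T
  have hmv : ∀ v : Fin 2 → K, (ρ g₀ : Matrix (Fin 2) (Fin 2) K).mulVec v
      = ![algebraMap A K lam₁ * v 0, algebraMap A K lam₂ * v 1] := by
    intro v
    funext i
    rw [hdiag]
    fin_cases i <;> simp [Matrix.mulVec_diagonal]
  have hcan0 : (↑hu.unit⁻¹ : A) * (lam₁ - lam₂) = 1 := by
    simpa [IsUnit.unit_spec] using hu.unit.inv_mul
  have hproj0 : ∀ v ∈ T, (![v 0, 0] : Fin 2 → K) ∈ T := by
    intro v hv
    have he2 : (lam₁ - lam₂) • (![v 0, 0] : Fin 2 → K)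
        = (ρ g₀ : Matrix (Fin 2) (Fin 2) K).mulVec v - lam₂ • v := by
      funext i
      fin_cases i <;> simp [hmv v, Algebra.smul_def, map_sub] <;> ring
    have he3 : (![v 0, 0] : Fin 2 → K)
        = (↑hu.unit⁻¹ : A) • ((lam₁ - lam₂) • (![v 0, 0] : Fin 2 → K)) := by
      rw [smul_smul, hcan0, one_smul]
    rw [he3, he2]
    exact T.smul_mem _ (sub_mem (hstab g₀ v hv) (T.smul_mem lam₂ hv))
  have hproj1 : ∀ v ∈ T, (![0, v 1] : Fin 2 → K) ∈ T := by
    intro v hv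
    have hcan1 : (-(↑hu.unit⁻¹ : A)) * (lam₂ - lam₁) = 1 := by linear_combination hcan0
    have he2 : (lam₂ - lam₁) • (![0, v 1] : Fin 2 → K)
        = (ρ g₀ : Matrix (Fin 2) (Fin 2) K).mulVec v - lam₁ • v := by
      funext i
      fin_cases i <;> simp [hmv v, Algebra.smul_def, map_sub] <;> ring
    have he3 : (![0, v 1] : Fin 2 → K)
        = (-(↑hu.unit⁻¹ : A)) • ((lam₂ - lam₁) • (![0, v 1] : Fin 2 → K)) := by
      rw [smul_smul, hcan1, one_smul]
    rw [he3, he2]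
    exact T.smul_mem _ (sub_mem (hstab g₀ v hv) (T.smul_mem lam₁ hv))
  -- coordinate images are principal
  obtain ⟨α, hJ0⟩ := principal_of_fg
    (T.map ((LinearMap.proj 0 : (Fin 2 → K) →ₗ[K] K).restrictScalars A))
    (hTfg.map _)
  obtain ⟨β, hJ1⟩ := principal_of_fg
    (T.map ((LinearMap.proj 1 : (Fin 2 → K) →ₗ[K] K).restrictScalars A))
    (hTfg.map _)
  have hmem0 : ∀ v ∈ T, ∃ x : A, algebraMap A K x * α = v 0 := by
    intro v hv
    have hm : v 0 ∈ Submodule.span A {α} := hJ0 ▸ Submodule.mem_map_of_mem hv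
    obtain ⟨x, hx⟩ := Submodule.mem_span_singleton.mp hm
    exact ⟨x, by rw [← hx, Algebra.smul_def]⟩
  have hmem1 : ∀ v ∈ T, ∃ x : A, algebraMap A K x * β = v 1 := by
    intro v hv
    have hm : v 1 ∈ Submodule.span A {β} := hJ1 ▸ Submodule.mem_map_of_mem hv
    obtain ⟨x, hx⟩ := Submodule.mem_span_singleton.mp hm
    exact ⟨x, by rw [← hx, Algebra.smul_def]⟩
  have hvex : ∀ i : Fin 2, ∃ v ∈ T, v i ≠ 0 := by
    intro i
    by_contra h
    push_neg at h
    have hker : (T : Set (Fin 2 → K))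
        ⊆ (LinearMap.ker (LinearMap.proj (R := K) (φ := fun _ : Fin 2 => K) i) : Set _) :=
      fun v hv => by simpa using h v hv
    have htop := hTspan ▸ Submodule.span_le.mpr hker
    have h1 : (Pi.single i 1 : Fin 2 → K)
        ∈ LinearMap.ker (LinearMap.proj (R := K) (φ := fun _ : Fin 2 => K) i) :=
      htop Submodule.mem_top
    simp [LinearMap.mem_ker] at h1
  have hα : α ≠ 0 := by
    obtain ⟨v, hv, hv0⟩ := hvex 0
    obtain ⟨x, hx⟩ := hmem0 v hv
    intro h0
    rw [h0, mul_zero] at hx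
    exact hv0 hx.symm
  have hβ : β ≠ 0 := by
    obtain ⟨v, hv, hv0⟩ := hvex 1
    obtain ⟨x, hx⟩ := hmem1 v hv
    intro h0
    rw [h0, mul_zero] at hx
    exact hv0 hx.symm
  have hαT : (![α, 0] : Fin 2 → K) ∈ T := by
    have hm : α ∈ T.map ((LinearMap.proj 0 : (Fin 2 → K) →ₗ[K] K).restrictScalars A) :=
      hJ0 ▸ Submodule.mem_span_singleton_self α
    obtain ⟨v, hv, hvα⟩ := hm
    have h0 : v 0 = α := hvα
    have := hproj0 v hv
    rwa [h0] at this
  have hβT : (![0, β] : Fin 2 → K) ∈ T := by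
    have hm : β ∈ T.map ((LinearMap.proj 1 : (Fin 2 → K) →ₗ[K] K).restrictScalars A) :=
      hJ1 ▸ Submodule.mem_span_singleton_self β
    obtain ⟨v, hv, hvβ⟩ := hm
    have h1 : v 1 = β := hvβ
    have := hproj1 v hv
    rwa [h1] at this
  -- matrix entries relative to the lattice basis
  have hAe : ∀ g : G, ∃ x : A, algebraMap A K x = (ρ g : Matrix (Fin 2) (Fin 2) K) 0 0 := by
    intro g
    obtain ⟨x, hx⟩ := hmem0 _ (hstab g _ hαT)
    refine ⟨x, mul_right_cancel₀ hα ?_⟩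
    rw [hx]
    simp [Matrix.mulVec, dotProduct, Fin.sum_univ_two]
  have hDe : ∀ g : G, ∃ x : A, algebraMap A K x = (ρ g : Matrix (Fin 2) (Fin 2) K) 1 1 := by
    intro g
    obtain ⟨x, hx⟩ := hmem1 _ (hstab g _ hβT)
    refine ⟨x, mul_right_cancel₀ hβ ?_⟩
    rw [hx]
    simp [Matrix.mulVec, dotProduct, Fin.sum_univ_two]
  have hBe : ∀ g : G, ∃ x : A,
      algebraMap A K x * α = (ρ g : Matrix (Fin 2) (Fin 2) K) 0 1 * β := by
    intro g
    obtain ⟨x, hx⟩ := hmem0 _ (hstab g _ hβT)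
    refine ⟨x, ?_⟩
    rw [hx]
    simp [Matrix.mulVec, dotProduct, Fin.sum_univ_two]
  have hCe : ∀ g : G, ∃ x : A,
      algebraMap A K x * β = (ρ g : Matrix (Fin 2) (Fin 2) K) 1 0 * α := by
    intro g
    obtain ⟨x, hx⟩ := hmem1 _ (hstab g _ hαT)
    refine ⟨x, ?_⟩
    rw [hx]
    simp [Matrix.mulVec, dotProduct, Fin.sum_univ_two]
  choose a ha using hAe
  choose b hb using hBe
  choose c hc using hCe
  choose d hd using hDe
  have hbc_e : ∀ g g' : G, algebraMap A K (b g * c g')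
      = (ρ g : Matrix (Fin 2) (Fin 2) K) 0 1 * (ρ g' : Matrix (Fin 2) (Fin 2) K) 1 0 := by
    intro g g'
    apply mul_right_cancel₀ (mul_ne_zero hα hβ)
    rw [_root_.map_mul]
    linear_combination (algebraMap A K (c g') * β) * hb g
      + ((ρ g : Matrix (Fin 2) (Fin 2) K) 0 1 * β) * hc g'
  have hcb_e : ∀ g g' : G, algebraMap A K (c g * b g')
      = (ρ g : Matrix (Fin 2) (Fin 2) K) 1 0 * (ρ g' : Matrix (Fin 2) (Fin 2) K) 0 1 := by
    intro g g'
    apply mul_right_cancel₀ (mul_ne_zero hβ hα)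
    rw [_root_.map_mul]
    linear_combination (algebraMap A K (b g') * α) * hc g
      + ((ρ g : Matrix (Fin 2) (Fin 2) K) 1 0 * α) * hb g'
  have hM : ∀ g h : G, (ρ (g * h) : Matrix (Fin 2) (Fin 2) K)
      = (ρ g : Matrix (Fin 2) (Fin 2) K) * (ρ h : Matrix (Fin 2) (Fin 2) K) := by
    intro g h
    rw [_root_.map_mul]
    rfl
  have hone : (ρ (1 : G) : Matrix (Fin 2) (Fin 2) K) = 1 := by
    rw [_root_.map_one]
    rfl
  have hma : ∀ g h : G, a (g * h) = a g * a h + b g * c h := by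
    intro g h
    apply hinj
    calc algebraMap A K (a (g * h)) = (ρ (g * h) : Matrix (Fin 2) (Fin 2) K) 0 0 := ha _
      _ = (ρ g : Matrix (Fin 2) (Fin 2) K) 0 0 * (ρ h : Matrix (Fin 2) (Fin 2) K) 0 0
          + (ρ g : Matrix (Fin 2) (Fin 2) K) 0 1 * (ρ h : Matrix (Fin 2) (Fin 2) K) 1 0 := by
        rw [hM]; simp [Matrix.mul_apply, Fin.sum_univ_two]
      _ = algebraMap A K (a g * a h + b g * c h) := by
        rw [map_add, _root_.map_mul, ha, ha, hbc_e]
  have hmd : ∀ g h : G, d (g * h) = c g * b h + d g * d h := by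
    intro g h
    apply hinj
    calc algebraMap A K (d (g * h)) = (ρ (g * h) : Matrix (Fin 2) (Fin 2) K) 1 1 := hd _
      _ = (ρ g : Matrix (Fin 2) (Fin 2) K) 1 0 * (ρ h : Matrix (Fin 2) (Fin 2) K) 0 1
          + (ρ g : Matrix (Fin 2) (Fin 2) K) 1 1 * (ρ h : Matrix (Fin 2) (Fin 2) K) 1 1 := by
        rw [hM]; simp [Matrix.mul_apply, Fin.sum_univ_two]
      _ = algebraMap A K (c g * b h + d g * d h) := by
        rw [map_add, hcb_e, _root_.map_mul, hd, hd]
  have ha1 : a 1 = 1 := by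
    apply hinj
    rw [ha, hone, _root_.map_one]
    simp
  have hd1 : d 1 = 1 := by
    apply hinj
    rw [hd, hone, _root_.map_one]
    simp
  have hact1 : ∀ g : G, ((ρ g : Matrix (Fin 2) (Fin 2) K).mulVec ![α, 0])
      = a g • ![α, 0] + c g • ![0, β] := by
    intro g
    funext i
    fin_cases i <;> simp [Matrix.mulVec, dotProduct, Fin.sum_univ_two, Algebra.smul_def]
    · exact Or.inl (ha g).symm
    · exact (hc g).symm
  have hact2 : ∀ g : G, ((ρ g : Matrix (Fin 2) (Fin 2) K).mulVec ![0, β])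
      = b g • ![α, 0] + d g • ![0, β] := by
    intro g
    funext i
    fin_cases i <;> simp [Matrix.mulVec, dotProduct, Fin.sum_univ_two, Algebra.smul_def]
    · exact (hb g).symm
    · exact Or.inl (hd g).symm
  have hrep : ∀ v ∈ T, ∃ x y : A, v = x • (![α, 0] : Fin 2 → K) + y • (![0, β] : Fin 2 → K) := by
    intro v hv
    obtain ⟨x, hx⟩ := hmem0 v hv
    obtain ⟨y, hy⟩ := hmem1 v hv
    refine ⟨x, y, ?_⟩
    funext i
    fin_cases i <;> simp [Algebra.smul_def]
    · exact hx.symm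
    · exact hy.symm

  -- ===== main goals =====
  constructor
  · constructor
    · -- forward direction
      intro hI
      have hbcI : ∀ g g' : G, b g * c g' ∈ Ideal.span {ϖ} := fun g g' =>
        hI (Ideal.subset_span ⟨g, g', hbc_e g g'⟩)
      by_cases hcI : ∀ g : G, c g ∈ Ideal.span {ϖ}
      · obtain ⟨ψ₁, ψ₂, W, h⟩ := aux_case (Ideal.span {ϖ}) ρ T hstab ![α, 0] ![0, β]
          hαT hβT hrep a b c d hact1 hact2 ha1 hd1 hma hmd hbcI hcI
        exact ⟨ψ₁, ψ₂, a, d, W, h⟩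
      · push_neg at hcI
        obtain ⟨g₁, hg₁⟩ := hcI
        have hbI : ∀ g : G, b g ∈ Ideal.span {ϖ} := fun g =>
          (hprime.mem_or_mem (hbcI g g₁)).resolve_right hg₁
        have hrep' : ∀ v ∈ T, ∃ x y : A,
            v = x • (![0, β] : Fin 2 → K) + y • (![α, 0] : Fin 2 → K) := by
          intro v hv
          obtain ⟨x, y, hxy⟩ := hrep v hv
          exact ⟨y, x, by rw [hxy, add_comm]⟩
        have hact2' : ∀ g : G, ((ρ g : Matrix (Fin 2) (Fin 2) K).mulVec ![0, β])
            = d g • ![0, β] + b g • ![α, 0] := by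
          intro g; rw [hact2, add_comm]
        have hact1' : ∀ g : G, ((ρ g : Matrix (Fin 2) (Fin 2) K).mulVec ![α, 0])
            = c g • ![0, β] + a g • ![α, 0] := by
          intro g; rw [hact1, add_comm]
        have hmd' : ∀ g h : G, d (g * h) = d g * d h + c g * b h := by
          intro g h; rw [hmd g h]; ring
        have hma' : ∀ g h : G, a (g * h) = b g * c h + a g * a h := by
          intro g h; rw [hma g h]; ring
        have hcbI : ∀ g g' : G, c g * b g' ∈ Ideal.span {ϖ} := fun g g' =>
          Ideal.mul_mem_left _ _ (hbI g')
        obtain ⟨ψ₁, ψ₂, W, h⟩ := aux_case (Ideal.span {ϖ}) ρ T hstab ![0, β] ![α, 0]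
          hβT hαT hrep' d c b a hact2' hact1' hd1 ha1 hmd' hma' hcbI hbI
        exact ⟨ψ₁, ψ₂, d, a, W, h⟩
    · -- reverse direction
      rintro ⟨ψ₁, ψ₂, s₁, s₂, W, hs₁, hs₂, hITW, hWT, hWstab, hcond1, hcond2⟩
      rw [Ideal.span_le]
      rintro r ⟨g, g', hr⟩
      have hrbc : r = b g * c g' := hinj (by rw [hr, hbc_e])
      have hIco : ∀ u ∈ Ideal.span {ϖ} • T,
          (∃ r₀ ∈ Ideal.span {ϖ}, u 0 = algebraMap A K r₀ * α) ∧
          (∃ r₁ ∈ Ideal.span {ϖ}, u 1 = algebraMap A K r₁ * β) := by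
        intro u hu
        refine Submodule.smul_induction_on hu ?_ ?_
        · intro s hsI v hv
          obtain ⟨x, hx⟩ := hmem0 v hv
          obtain ⟨y, hy⟩ := hmem1 v hv
          refine ⟨⟨s * x, Ideal.mul_mem_right _ _ hsI, ?_⟩,
            ⟨s * y, Ideal.mul_mem_right _ _ hsI, ?_⟩⟩
          · rw [_root_.map_mul]
            have : (s • v) 0 = algebraMap A K s * v 0 := by
              simp [Algebra.smul_def]
            rw [this, ← hx]; ring
          · rw [_root_.map_mul]
            have : (s • v) 1 = algebraMap A K s * v 1 := by
              simp [Algebra.smul_def]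
            rw [this, ← hy]; ring
        · rintro u₁ u₂ ⟨⟨r₀, h0, e0⟩, ⟨r₁, h1, e1⟩⟩ ⟨⟨r₀', h0', e0'⟩, ⟨r₁', h1', e1'⟩⟩
          refine ⟨⟨r₀ + r₀', add_mem h0 h0', ?_⟩, ⟨r₁ + r₁', add_mem h1 h1', ?_⟩⟩
          · rw [map_add, Pi.add_apply, e0, e0']; ring
          · rw [map_add, Pi.add_apply, e1, e1']; ring
      -- first key membership : (lam₂ - s₁ g₀) * c g' ∈ (ϖ)
      have key2 : (lam₂ - s₁ g₀) * c g' ∈ Ideal.span {ϖ} := by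
        have hwW : ((ρ g' : Matrix (Fin 2) (Fin 2) K).mulVec ![α, 0])
            - algebraMap A K (s₂ g') • ![α, 0] ∈ W := hcond2 g' _ hαT
        set w := ((ρ g' : Matrix (Fin 2) (Fin 2) K).mulVec ![α, 0])
            - algebraMap A K (s₂ g') • ![α, 0] with hwdef
        have hw1 : w 1 = algebraMap A K (c g') * β := by
          rw [hwdef]
          simp [Matrix.mulVec, dotProduct, Fin.sum_univ_two]
          exact (hc g').symm
        have huIT := hcond1 g₀ w hwW
        obtain ⟨_, ⟨r₁, hr₁I, hr₁⟩⟩ := hIco _ huIT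
        have hu1 : ((ρ g₀ : Matrix (Fin 2) (Fin 2) K).mulVec w
            - algebraMap A K (s₁ g₀) • w) 1
            = algebraMap A K ((lam₂ - s₁ g₀) * c g') * β := by
          have : ((ρ g₀ : Matrix (Fin 2) (Fin 2) K).mulVec w) 1
              = algebraMap A K lam₂ * w 1 := by rw [hmv w]; simp
          rw [Pi.sub_apply, this, Pi.smul_apply, smul_eq_mul, hw1,
            _root_.map_mul, map_sub]
          ring
        rw [hu1] at hr₁
        have : (lam₂ - s₁ g₀) * c g' = r₁ := hinj (mul_right_cancel₀ hβ hr₁)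
        rwa [← this] at hr₁I
      have key1 : (lam₁ - s₁ g₀) * b g ∈ Ideal.span {ϖ} := by
        have hwW : ((ρ g : Matrix (Fin 2) (Fin 2) K).mulVec ![0, β])
            - algebraMap A K (s₂ g) • ![0, β] ∈ W := hcond2 g _ hβT
        set w := ((ρ g : Matrix (Fin 2) (Fin 2) K).mulVec ![0, β])
            - algebraMap A K (s₂ g) • ![0, β] with hwdef
        have hw0 : w 0 = algebraMap A K (b g) * α := by
          rw [hwdef]
          simp [Matrix.mulVec, dotProduct, Fin.sum_univ_two]
          exact (hb g).symm
        have huIT := hcond1 g₀ w hwW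
        obtain ⟨⟨r₀, hr₀I, hr₀⟩, _⟩ := hIco _ huIT
        have hu0 : ((ρ g₀ : Matrix (Fin 2) (Fin 2) K).mulVec w
            - algebraMap A K (s₁ g₀) • w) 0
            = algebraMap A K ((lam₁ - s₁ g₀) * b g) * α := by
          have : ((ρ g₀ : Matrix (Fin 2) (Fin 2) K).mulVec w) 0
              = algebraMap A K lam₁ * w 0 := by rw [hmv w]; simp
          rw [Pi.sub_apply, this, Pi.smul_apply, smul_eq_mul, hw0,
            _root_.map_mul, map_sub]
          ring
        rw [hu0] at hr₀
        have : (lam₁ - s₁ g₀) * b g = r₀ := hinj (mul_right_cancel₀ hα hr₀)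
        rwa [← this] at hr₀I
      rw [hrbc]
      by_cases hbg : b g ∈ Ideal.span {ϖ}
      · exact Ideal.mul_mem_right _ _ hbg
      by_cases hcg : c g' ∈ Ideal.span {ϖ}
      · exact Ideal.mul_mem_left _ _ hcg
      exfalso
      have h1 : lam₁ - s₁ g₀ ∈ Ideal.span {ϖ} := (hprime.mem_or_mem key1).resolve_right hbg
      have h2 : lam₂ - s₁ g₀ ∈ Ideal.span {ϖ} := (hprime.mem_or_mem key2).resolve_right hcg
      apply hdist
      have := sub_mem h1 h2
      simpa using this
  · -- distinctness of the characters
    intro ψ₁ ψ₂ htra hEq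
    apply hdist
    have e1 : t g₀ = lam₁ + lam₂ := by
      apply hinj
      rw [htr g₀, hdiag, map_add]
      simp [Matrix.trace, Matrix.diag, Fin.sum_univ_two]
    have e2 : t (g₀ * g₀) = lam₁ * lam₁ + lam₂ * lam₂ := by
      apply hinj
      rw [htr (g₀ * g₀), hM, hdiag, Matrix.diagonal_mul_diagonal, map_add,
        _root_.map_mul, _root_.map_mul]
      simp [Matrix.trace, Matrix.diag, Fin.sum_univ_two]
    have h1 := htra g₀
    have h2 := htra (g₀ * g₀)
    rw [e1] at h1
    rw [e2] at h2
    rw [hEq] at h1 h2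
    have hmul : ((ψ₂ (g₀ * g₀) : A ⧸ Ideal.span {ϖ}))
        = (ψ₂ g₀ : A ⧸ Ideal.span {ϖ}) * (ψ₂ g₀ : A ⧸ Ideal.span {ϖ}) := by
      rw [_root_.map_mul, Units.val_mul]
    rw [hmul] at h2
    have hsplit : Ideal.Quotient.mk (Ideal.span {ϖ}) ((lam₁ - lam₂) * (lam₁ - lam₂))
        = Ideal.Quotient.mk (Ideal.span {ϖ}) (lam₁ * lam₁ + lam₂ * lam₂)
          + Ideal.Quotient.mk (Ideal.span {ϖ}) (lam₁ * lam₁ + lam₂ * lam₂)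
          - Ideal.Quotient.mk (Ideal.span {ϖ}) (lam₁ + lam₂)
            * Ideal.Quotient.mk (Ideal.span {ϖ}) (lam₁ + lam₂) := by
      rw [← _root_.map_mul, ← map_add, ← map_sub]
      exact congrArg _ (by ring)
    have hq : Ideal.Quotient.mk (Ideal.span {ϖ}) ((lam₁ - lam₂) * (lam₁ - lam₂)) = 0 := by
      rw [hsplit, h1, h2]
      ring
    have hmem := Ideal.Quotient.eq_zero_iff_mem.mp hq
    exact (hprime.mem_or_mem hmem).elim id id
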